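/- Let r ∈ ℝ with r > 1 and q₀ = √(r² − 1). For every nonzero z ∈ ℂ the following are equivalent: (i) there exists a nonzero λ ∈ ℂ with |λ| = 1 and r(λ + λ⁻¹) = z + z⁻¹; (ii) |z| = 1, or (Im z = 0 and r − q₀ ≤ |z| ≤ r + q₀). -/

import Mathlib

open Complex

lemma aux_inv_eq_conj (l : ℂ) (hl : ‖l‖ = 1) : l⁻¹ = starRingEnd ℂ l := by
  rw [Complex.inv_def, Complex.normSq_eq_norm_sq, hl]
  simp

lemma aux_sum_eq (l : ℂ) (hl : ‖l‖ = 1) : l + l⁻¹ = ((2 * l.re : ℝ) : ℂ) := by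
  rw [aux_inv_eq_conj l hl]
  apply Complex.ext
  · simp [Complex.add_re]; ring
  · simp [Complex.add_im]

lemma aux_abs_sum (x : ℝ) (hx : x ≠ 0) : |x + 1 / x| = |x| + 1 / |x| := by
  have h1 : x + 1 / x = (x ^ 2 + 1) / x := by field_simp
  have h2 : |x| + 1 / |x| = (x ^ 2 + 1) / |x| := by
    rw [← _root_.sq_abs x]
    have hx' : |x| ≠ 0 := abs_ne_zero.mpr hx
    field_simp
  rw [h1, h2, abs_div, abs_of_pos (by positivity : (0:ℝ) < x ^ 2 + 1)]

lemma aux_exists (r : ℝ) (hr : 0 < r) (c : ℝ) (hc : |c| ≤ 2 * r) :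
    ∃ l : ℂ, l ≠ 0 ∧ ‖l‖ = 1 ∧ (r : ℂ) * (l + l⁻¹) = (c : ℂ) := by
  set a := c / (2 * r) with ha
  have ha1 : a ^ 2 ≤ 1 := by
    rw [ha, div_pow, div_le_one (by positivity)]
    nlinarith [_root_.sq_abs c, mul_self_le_mul_self (abs_nonneg c) hc]
  set l : ℂ := ⟨a, Real.sqrt (1 - a ^ 2)⟩ with hl
  have habs : ‖l‖ = 1 := by
    rw [Complex.norm_def, Complex.normSq_mk]
    have h1 : Real.sqrt (1 - a ^ 2) * Real.sqrt (1 - a ^ 2) = 1 - a ^ 2 :=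
      Real.mul_self_sqrt (by linarith)
    rw [h1]
    have h2 : a * a + (1 - a ^ 2) = 1 := by ring
    rw [h2, Real.sqrt_one]
  refine ⟨l, ?_, habs, ?_⟩
  · intro h
    rw [h] at habs; simp at habs
  · rw [aux_sum_eq l habs]
    have hre : l.re = a := rfl
    rw [hre, ha]
    exact_mod_cast congrArg (Complex.ofReal) (by field_simp : r * (2 * (c / (2 * r))) = c)

set_option maxHeartbeats 2000000 in
theorem stmt_3 (r : ℝ) (hr : 1 < r) (q₀ : ℝ) (hq₀ : q₀ = Real.sqrt (r ^ 2 - 1)) :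
    ∀ z : ℂ, z ≠ 0 →
      ((∃ l : ℂ, l ≠ 0 ∧ ‖l‖ = 1 ∧ (r : ℂ) * (l + l⁻¹) = z + z⁻¹) ↔
        (‖z‖ = 1 ∨
          (z.im = 0 ∧ r - q₀ ≤ ‖z‖ ∧ ‖z‖ ≤ r + q₀))) := by
  intro z hz
  have hr0 : (0:ℝ) < r := by linarith
  have hq0sq : q₀ ^ 2 = r ^ 2 - 1 := by
    rw [hq₀]; exact Real.sq_sqrt (by nlinarith)
  have hq0pos : 0 < q₀ := by
    rw [hq₀]; exact Real.sqrt_pos.mpr (by nlinarith)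
  have hq0lt : q₀ < r := by nlinarith
  have hS : 0 < Complex.normSq z := Complex.normSq_pos.mpr hz
  constructor
  · rintro ⟨l, hl0, hl1, heq⟩
    rw [aux_sum_eq l hl1] at heq
    have heq' : z + z⁻¹ = ((r * (2 * l.re) : ℝ) : ℂ) := by
      rw [← heq]; push_cast; ring
    set c : ℝ := r * (2 * l.re) with hc
    have hcle : |c| ≤ 2 * r := by
      have h1 : |l.re| ≤ 1 := by
        have := Complex.abs_re_le_norm l
        rw [hl1] at this; exact this
      rw [hc, abs_mul, abs_mul, abs_of_pos hr0]
      have h2 : |(2:ℝ)| = 2 := by norm_num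
      rw [h2]
      nlinarith [abs_nonneg l.re]
    have him : z.im + (-z.im / Complex.normSq z) = 0 := by
      have := congrArg Complex.im heq'
      simpa [Complex.add_im, Complex.inv_im] using this
    have hkey : z.im * (Complex.normSq z - 1) = 0 := by
      field_simp at him
      nlinarith [him]
    rcases mul_eq_zero.mp hkey with h1 | h2
    · right
      have hre : z.re + z.re / Complex.normSq z = c := by
        have := congrArg Complex.re heq'
        simpa [Complex.add_re, Complex.inv_re] using this
      have hns : Complex.normSq z = z.re * z.re := by
        rw [Complex.normSq_apply, h1]; ring
      have hrene : z.re ≠ 0 := by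
        intro h; rw [hns, h] at hS; simp at hS
      have habseq : ‖z‖ = |z.re| := by
        rw [Complex.norm_def, hns, ← abs_mul_self z.re, abs_mul]
        exact Real.sqrt_mul_self (abs_nonneg _)
      set t := |z.re| with ht
      have ht0 : 0 < t := abs_pos.mpr hrene
      have hceq : z.re + 1 / z.re = c := by
        rw [← hre, hns]; field_simp
      have hsum : t + 1 / t ≤ 2 * r := by
        calc t + 1 / t = |z.re + 1 / z.re| := (aux_abs_sum z.re hrene).symm
          _ = |c| := by rw [hceq]
          _ ≤ 2 * r := hcle
      have hmul : (t + 1 / t) * t = t ^ 2 + 1 := by field_simp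
      have hquad : t ^ 2 - 2 * r * t + 1 ≤ 0 := by
        nlinarith [mul_le_mul_of_nonneg_right hsum ht0.le]
      refine ⟨h1, ?_, ?_⟩
      · rw [habseq]; nlinarith [sq_nonneg (t - r + q₀), sq_nonneg (t - r - q₀)]
      · rw [habseq]; nlinarith [sq_nonneg (t - r + q₀), sq_nonneg (t - r - q₀)]
    · left
      have h3 : Complex.normSq z = 1 := by linarith
      rw [Complex.norm_def, h3, Real.sqrt_one]
  · intro h
    rcases h with h1 | ⟨him, hlo, hhi⟩
    · have hsum : z + z⁻¹ = ((2 * z.re : ℝ) : ℂ) := aux_sum_eq z h1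
      have hre : |2 * z.re| ≤ 2 * r := by
        have h2 : |z.re| ≤ 1 := by
          have := Complex.abs_re_le_norm z
          rw [h1] at this; exact this
        rw [abs_mul]
        have h3 : |(2:ℝ)| = 2 := by norm_num
        rw [h3]
        nlinarith [abs_nonneg z.re]
      obtain ⟨l, hl0, hl1, heq⟩ := aux_exists r hr0 (2 * z.re) hre
      exact ⟨l, hl0, hl1, by rw [heq, hsum]⟩
    · lift z to ℝ using him with x hx
      have hxne : x ≠ 0 := by
        intro h; rw [h] at hz; exact hz (by norm_num)
      have habseq : ‖(x : ℂ)‖ = |x| := Complex.norm_real x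
      rw [habseq] at hlo hhi
      have ht0 : 0 < |x| := abs_pos.mpr hxne
      have hsumle : |x + 1 / x| ≤ 2 * r := by
        rw [aux_abs_sum x hxne]
        have hquad : |x| ^ 2 - 2 * r * |x| + 1 ≤ 0 := by
          nlinarith [mul_nonneg (by linarith : (0:ℝ) ≤ |x| - (r - q₀)) (by linarith : (0:ℝ) ≤ (r + q₀) - |x|)]
        have hmul : (|x| + 1 / |x|) * |x| = |x| ^ 2 + 1 := by field_simp
        nlinarith [hmul, hquad, ht0]
      obtain ⟨l, hl0, hl1, heq⟩ := aux_exists r hr0 (x + 1 / x) hsumle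
      refine ⟨l, hl0, hl1, ?_⟩
      rw [heq]
      push_cast
      rw [one_div]
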